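/- arXiv:2305.12798 — 2 statements merged into one kernel-verified Lean document; each statement's English description precedes it below -/
import Mathlib

section
/- Let Φ ∈ ℝ^{d×n} satisfy Φ Φᵀ = C₂ I_d. Suppose T = Φᵀ S Φ where S is block-diagonal of the form diag(T_s, I_{d_c}) with T_s ∈ ℝ^{d_s×d_s}, and W' = diag(I_{d_s}, Λ) with Λ ∈ ℝ^{d_c×d_c} diagonal. Then T (Φᵀ W' Φ) = (Φᵀ W' Φ) T. -/
theorem stmt_1 {ds dc n : ℕ} (C₂ : ℝ)
    (Φ : Matrix (Fin ds ⊕ Fin dc) (Fin n) ℝ)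
    (Ts : Matrix (Fin ds) (Fin ds) ℝ) (Λ : Fin dc → ℝ)
    (hΦ : Φ * Φ.transpose = C₂ • (1 : Matrix (Fin ds ⊕ Fin dc) (Fin ds ⊕ Fin dc) ℝ)) :
    (Φ.transpose * (Matrix.fromBlocks Ts 0 0 1 : Matrix (Fin ds ⊕ Fin dc) (Fin ds ⊕ Fin dc) ℝ) * Φ) *
        (Φ.transpose * (Matrix.fromBlocks 1 0 0 (Matrix.diagonal Λ) : Matrix (Fin ds ⊕ Fin dc) (Fin ds ⊕ Fin dc) ℝ) * Φ) =
      (Φ.transpose * (Matrix.fromBlocks 1 0 0 (Matrix.diagonal Λ) : Matrix (Fin ds ⊕ Fin dc) (Fin ds ⊕ Fin dc) ℝ) * Φ) *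
        (Φ.transpose * (Matrix.fromBlocks Ts 0 0 1 : Matrix (Fin ds ⊕ Fin dc) (Fin ds ⊕ Fin dc) ℝ) * Φ) := by
  have h : ∀ A B : Matrix (Fin ds ⊕ Fin dc) (Fin ds ⊕ Fin dc) ℝ,
      (Φ.transpose * A * Φ) * (Φ.transpose * B * Φ)
        = C₂ • (Φ.transpose * (A * B) * Φ) := by
    intro A B
    calc (Φ.transpose * A * Φ) * (Φ.transpose * B * Φ)
        = Φ.transpose * A * (Φ * Φ.transpose) * (B * Φ) := by
          simp only [Matrix.mul_assoc]
      _ = C₂ • (Φ.transpose * (A * B) * Φ) := by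
          rw [hΦ]
          simp only [Matrix.mul_smul, Matrix.smul_mul, Matrix.mul_one, Matrix.mul_assoc]
  rw [h, h]
  congr 2
  rw [Matrix.fromBlocks_multiply, Matrix.fromBlocks_multiply]
  simp
end

section
/- Let T = Φᵀ diag(T_s, I_{d_c}) Φ with Φ Φᵀ = C₂ I_d, let B = Φᵀ diag(A, Λ') Φ with Λ' diagonal, and let W' = diag(I_{d_s}, Λ) with Λ diagonal. Then T B (Φᵀ W' Φ) = (Φᵀ W' Φ) T B. -/
theorem stmt_5 {ds dc n : ℕ} (C₂ : ℝ)
    (Φ : Matrix (Fin ds ⊕ Fin dc) (Fin n) ℝ)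
    (Ts : Matrix (Fin ds) (Fin ds) ℝ)
    (A : Matrix (Fin ds) (Fin ds) ℝ) (Λ' Λ : Fin dc → ℝ)
    (hΦ : Φ * Φ.transpose = C₂ • (1 : Matrix (Fin ds ⊕ Fin dc) (Fin ds ⊕ Fin dc) ℝ)) :
    (Φ.transpose * (Matrix.fromBlocks Ts 0 0 1 : Matrix (Fin ds ⊕ Fin dc) (Fin ds ⊕ Fin dc) ℝ) * Φ) *
        (Φ.transpose * (Matrix.fromBlocks A 0 0 (Matrix.diagonal Λ') : Matrix (Fin ds ⊕ Fin dc) (Fin ds ⊕ Fin dc) ℝ) * Φ) *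
        (Φ.transpose * (Matrix.fromBlocks 1 0 0 (Matrix.diagonal Λ) : Matrix (Fin ds ⊕ Fin dc) (Fin ds ⊕ Fin dc) ℝ) * Φ) =
      (Φ.transpose * (Matrix.fromBlocks 1 0 0 (Matrix.diagonal Λ) : Matrix (Fin ds ⊕ Fin dc) (Fin ds ⊕ Fin dc) ℝ) * Φ) *
        ((Φ.transpose * (Matrix.fromBlocks Ts 0 0 1 : Matrix (Fin ds ⊕ Fin dc) (Fin ds ⊕ Fin dc) ℝ) * Φ) *
          (Φ.transpose * (Matrix.fromBlocks A 0 0 (Matrix.diagonal Λ') : Matrix (Fin ds ⊕ Fin dc) (Fin ds ⊕ Fin dc) ℝ) * Φ)) := by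
  have key : ∀ X Y : Matrix (Fin ds ⊕ Fin dc) (Fin ds ⊕ Fin dc) ℝ,
      (Φ.transpose * X * Φ) * (Φ.transpose * Y * Φ)
        = C₂ • (Φ.transpose * (X * Y) * Φ) := by
    intro X Y
    calc (Φ.transpose * X * Φ) * (Φ.transpose * Y * Φ)
        = Φ.transpose * X * (Φ * Φ.transpose) * Y * Φ := by
          simp only [Matrix.mul_assoc]
      _ = C₂ • (Φ.transpose * (X * Y) * Φ) := by
          rw [hΦ]
          simp only [Matrix.mul_smul, Matrix.smul_mul, Matrix.mul_one, Matrix.mul_assoc]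
  rw [key, smul_mul_assoc, key, mul_smul_comm, key, smul_smul, smul_smul]
  congr 1
  simp only [Matrix.fromBlocks_multiply, Matrix.mul_zero, Matrix.zero_mul, Matrix.mul_one,
    Matrix.one_mul, add_zero, zero_add, Matrix.diagonal_mul_diagonal]
  have : (fun i => Λ' i * Λ i) = fun i => Λ i * Λ' i := by ext i; ring
  rw [this]
end
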